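/- Let ζ be a primitive aperiodic substitution of constant length q and height h > 1, with one-sided fixed point U, and let η be its pure base substitution on the alphabet ℐ of length-h blocks of U with coding map φ satisfying φ ∘ η = ζ ∘ φ and φ(V) = U for the fixed point V of η. Then the spectrum of the substitution matrix S_η and the spectrum of S_ζ may differ only by 0 or roots of unity: for every θ ∈ ℂ with θ ≠ 0 and θⁿ ≠ 1 for all n ≥ 1, θ is an eigenvalue of S_ζ if and only if θ is an eigenvalue of S_η. -/

import Mathlib

open MeasureTheory Filter

/-- A substitution on the alphabet `Fin m`, applied to a word by concatenation. -/
def substWord {m : ℕ} (ζ : Fin m → List (Fin m)) (w : List (Fin m)) : List (Fin m) :=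
  w.flatMap ζ

/-- The substitution matrix over `ℕ`: entry `(a, b)` is the number of occurrences of the
letter `a` in `ζ b`. -/
def substMatrixNat {m : ℕ} (ζ : Fin m → List (Fin m)) : Matrix (Fin m) (Fin m) ℕ :=
  Matrix.of fun a b => (ζ b).count a

/-- The substitution matrix regarded as a complex matrix. -/
def substMatrixC {m : ℕ} (ζ : Fin m → List (Fin m)) : Matrix (Fin m) (Fin m) ℂ :=
  Matrix.of fun a b => ((ζ b).count a : ℂ)

/-- Primitivity: some power of the substitution matrix has all entries positive. -/
def IsPrimitive {m : ℕ} (ζ : Fin m → List (Fin m)) : Prop :=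
  ∃ n : ℕ, ∀ a b, 0 < (substMatrixNat ζ ^ n) a b

/-- The shift by `k` on bi-infinite sequences; `shift 1` is the left shift `T`. -/
def shift {m : ℕ} (k : ℤ) (x : ℤ → Fin m) : ℤ → Fin m := fun n => x (n + k)

/-- The word of length `l` occurring in `x` at position `k`. -/
def window {m : ℕ} (x : ℤ → Fin m) (k : ℤ) (l : ℕ) : List (Fin m) :=
  (List.range l).map fun i => x (k + i)

/-- The substitution space: bi-infinite sequences all of whose finite subwords occur in some
`ζⁿ(a)`. -/
def SubstSpace {m : ℕ} (ζ : Fin m → List (Fin m)) : Set (ℤ → Fin m) :=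
  {x | ∀ (k : ℤ) (l : ℕ), ∃ (a : Fin m) (n : ℕ), (window x k l) <:+: (substWord ζ)^[n] [a]}

namespace PureBase

open Finset

/-! ### Generic sum helpers -/

lemma sum_range_add'' {M : Type*} [AddCommMonoid M] (f : ℕ → M) (c d : ℕ) :
    ∑ i ∈ Finset.range (c + d), f i
      = (∑ i ∈ Finset.range c, f i) + ∑ s ∈ Finset.range d, f (c + s) := by
  induction d with
  | zero => simp
  | succ d ih =>
      rw [show c + (d + 1) = (c + d) + 1 by omega, Finset.sum_range_succ, ih,
        Finset.sum_range_succ, add_assoc]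

lemma sum_range_mul'' {M : Type*} [AddCommMonoid M] (f : ℕ → M) (a b : ℕ) :
    ∑ i ∈ Finset.range (a * b), f i
      = ∑ r ∈ Finset.range a, ∑ s ∈ Finset.range b, f (b * r + s) := by
  induction a with
  | zero => simp
  | succ a ih =>
      rw [show (a + 1) * b = a * b + b by ring, sum_range_add'' f (a * b) b, ih,
        Finset.sum_range_succ]
      congr 1
      exact Finset.sum_congr rfl fun s _ => by rw [Nat.mul_comm a b]

lemma sum_group {α β : Type*} [Fintype β] [DecidableEq β] (s : Finset α) (f : α → β)
    (g : β → ℂ) (x : α → ℂ) :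
    ∑ i ∈ s, g (f i) * x i = ∑ b : β, g b * ∑ i ∈ s, if f i = b then x i else 0 := by
  have h1 : ∀ b : β, g b * (∑ i ∈ s, if f i = b then x i else 0)
      = ∑ i ∈ s, (if f i = b then g b * x i else 0) := fun b => by
    rw [Finset.mul_sum]; exact Finset.sum_congr rfl fun i _ => by split <;> simp
  simp only [h1]
  rw [Finset.sum_comm]
  refine Finset.sum_congr rfl fun i _ => ?_
  rw [Finset.sum_ite_eq Finset.univ (f i) (fun b => g b * x i)]
  simp

lemma aux_lt {q t r i : ℕ} (hq : 1 ≤ q) (ht : 1 ≤ t) (hr : r < q) (hi : i < t) :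
    r + i < q * t := by
  obtain ⟨q', rfl⟩ : ∃ q', q = q' + 1 := ⟨q - 1, by omega⟩
  obtain ⟨t', rfl⟩ : ∃ t', t = t' + 1 := ⟨t - 1, by omega⟩
  have : (q' + 1) * (t' + 1) = q' * t' + q' + t' + 1 := by ring
  omega

lemma aux_lt2 {q t r i : ℕ} (hq : 2 ≤ q) (ht : 2 ≤ t) (hr : r < q) (hi : i < t + 1) :
    r + i < q * t := by
  obtain ⟨q', rfl⟩ : ∃ q', q = q' + 2 := ⟨q - 2, by omega⟩
  obtain ⟨t', rfl⟩ : ∃ t', t = t' + 2 := ⟨t - 2, by omega⟩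
  have : (q' + 2) * (t' + 2) = q' * t' + 2 * q' + 2 * t' + 4 := by ring
  omega

lemma pow_mul_ne (θ : ℂ) (hθ0 : θ ≠ 0) (hθ1 : ∀ n : ℕ, 1 ≤ n → θ ^ n ≠ 1)
    {a b : ℕ} (hab : a < b) (c : ℂ) (hc : c ≠ 0) : θ ^ a * c ≠ θ ^ b * c := by
  intro hcon
  have h1 : θ ^ a = θ ^ b := mul_right_cancel₀ hc hcon
  have h2 : θ ^ a * θ ^ (b - a) = θ ^ a * 1 := by
    rw [mul_one, ← pow_add, Nat.add_sub_cancel' hab.le]; exact h1.symm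
  exact hθ1 (b - a) (by omega) (mul_left_cancel₀ (pow_ne_zero a hθ0) h2)

lemma pigeonhole_zero (θ : ℂ) (hθ0 : θ ≠ 0) (hθ1 : ∀ n : ℕ, 1 ≤ n → θ ^ n ≠ 1)
    (S : Finset ℂ) (c : ℂ) (hc : ∀ n : ℕ, θ ^ n * c ∈ S) : c = 0 := by
  by_contra hc0
  have hinj : Function.Injective fun n : ℕ => θ ^ n * c := by
    intro a b hab
    by_contra hne
    rcases Nat.lt_or_ge a b with hl | hg
    · exact pow_mul_ne θ hθ0 hθ1 hl c hc0 hab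
    · exact pow_mul_ne θ hθ0 hθ1 (by omega : b < a) c hc0 hab.symm
  have hinf : (Set.range fun n : ℕ => θ ^ n * c).Infinite :=
    Set.infinite_range_of_injective hinj
  have hsub : (Set.range fun n : ℕ => θ ^ n * c) ⊆ (S : Set ℂ) := by
    rintro zz ⟨n, rfl⟩; exact hc n
  exact hinf (Set.Finite.subset S.finite_toSet hsub)

/-! ### List counting helpers -/

variable {m : ℕ}

lemma count_flatMap (f : Fin m → List (Fin m)) (l : List (Fin m)) (a : Fin m) :
    (l.flatMap f).count a = ∑ b : Fin m, l.count b * (f b).count a := by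
  induction l with
  | nil => simp
  | cons x l ih =>
      rw [List.flatMap_cons, List.count_append, ih]
      have hb : ∀ b : Fin m, List.count b (x :: l) * (f b).count a
          = List.count b l * (f b).count a + (if x = b then (f x).count a else 0) := by
        intro b
        rw [List.count_cons]
        by_cases hbx : x = b
        · subst hbx; simp [add_mul]
        · simp [hbx]
      rw [Finset.sum_congr rfl fun b _ => hb b, Finset.sum_add_distrib,
        Finset.sum_ite_eq Finset.univ x (fun _ => (f x).count a)]
      simp [add_comm]

lemma sum_getD_count (l : List (Fin m)) (g : Fin m → ℂ) (d : Fin m) :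
    ∑ r ∈ Finset.range l.length, g (l.getD r d) = ∑ b : Fin m, (l.count b : ℂ) * g b := by
  induction l with
  | nil => simp
  | cons x l ih =>
      rw [List.length_cons, Finset.sum_range_succ']
      simp only [List.getD_cons_succ, List.getD_cons_zero]
      rw [ih]
      have hb : ∀ b : Fin m, ((List.count b (x :: l) : ℂ)) * g b
          = (List.count b l : ℂ) * g b + (if x = b then g b else 0) := by
        intro b
        rw [List.count_cons]
        by_cases hxb : x = b
        · subst hxb; push_cast; simp [add_mul]
        · simp [hxb]
      rw [Finset.sum_congr rfl fun b _ => hb b, Finset.sum_add_distrib,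
        Finset.sum_ite_eq Finset.univ x g]
      simp

lemma count_filter_getD (l : List (Fin m)) (d c : Fin m) :
    ((Finset.range l.length).filter fun r => l.getD r d = c).card = l.count c := by
  induction l with
  | nil => simp
  | cons x l ih =>
      rw [Finset.card_filter, List.length_cons, Finset.sum_range_succ']
      simp only [List.getD_cons_succ, List.getD_cons_zero]
      rw [← Finset.card_filter, ih, List.count_cons]
      simp

lemma getD_default_irrel (l : List (Fin m)) (i : ℕ) (hi : i < l.length) (d1 d2 : Fin m) :
    l.getD i d1 = l.getD i d2 := by
  rw [List.getD_eq_getElem _ _ hi, List.getD_eq_getElem _ _ hi]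

lemma getD_flatMap {q : ℕ} (f : Fin m → List (Fin m)) (hlen : ∀ a, (f a).length = q)
    (d : Fin m) :
    ∀ (l : List (Fin m)) (a b : ℕ), a < l.length → b < q →
      (l.flatMap f).getD (q * a + b) d = (f (l.getD a d)).getD b d := by
  intro l
  induction l with
  | nil => intro a b ha _; simp at ha
  | cons x l ih =>
      intro a b ha hb
      cases a with
      | zero =>
          rw [List.flatMap_cons, Nat.mul_zero, Nat.zero_add,
            List.getD_append _ _ _ _ (by rw [hlen]; exact hb)]
          simp
      | succ a =>
          rw [List.flatMap_cons,
            show q * (a + 1) + b = (f x).length + (q * a + b) by rw [hlen]; ring,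
            List.getD_append_right _ _ _ _ (Nat.le_add_right _ _)]
          rw [Nat.add_sub_cancel_left]
          rw [ih a b (by simpa using ha) hb]
          simp

/-! ### substWord iterates -/

lemma substWord_singleton (ζ : Fin m → List (Fin m)) (b : Fin m) :
    substWord ζ [b] = ζ b := by simp [substWord]

lemma substWord_iterate_flatMap (ζ : Fin m → List (Fin m)) (n : ℕ) :
    ∀ w : List (Fin m), (substWord ζ)^[n] w = w.flatMap fun b => (substWord ζ)^[n] [b] := by
  induction n with
  | zero => intro w; simp
  | succ n ih =>
      intro w
      calc (substWord ζ)^[n + 1] w = (substWord ζ)^[n] (substWord ζ w) :=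
            Function.iterate_succ_apply _ _ _
        _ = (substWord ζ w).flatMap fun b => (substWord ζ)^[n] [b] := ih _
        _ = w.flatMap fun a => (ζ a).flatMap fun b => (substWord ζ)^[n] [b] := by
            rw [substWord, List.flatMap_assoc]
        _ = w.flatMap fun a => (substWord ζ)^[n] (ζ a) :=
            congrArg (fun f => w.flatMap f) (funext fun a => (ih (ζ a)).symm)
        _ = w.flatMap fun b => (substWord ζ)^[n + 1] [b] :=
            congrArg (fun f => w.flatMap f) (funext fun b => by
              rw [Function.iterate_succ_apply, substWord_singleton])

lemma substWord_length {q : ℕ} (ζ : Fin m → List (Fin m)) (hlen : ∀ a, (ζ a).length = q)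
    (w : List (Fin m)) : (substWord ζ w).length = q * w.length := by
  induction w with
  | nil => simp [substWord]
  | cons x l ih =>
      simp only [substWord, List.flatMap_cons, List.length_append, hlen] at *
      rw [ih, List.length_cons]; ring

lemma substWord_iterate_length {q : ℕ} (ζ : Fin m → List (Fin m))
    (hlen : ∀ a, (ζ a).length = q) (n : ℕ) :
    ∀ w, ((substWord ζ)^[n] w).length = q ^ n * w.length := by
  induction n with
  | zero => intro w; simp
  | succ n ih =>
      intro w
      rw [Function.iterate_succ_apply, ih, substWord_length ζ hlen, pow_succ]; ring

lemma substMatrixNat_pow_apply (ζ : Fin m → List (Fin m)) (n : ℕ) (a b : Fin m) :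
    (substMatrixNat ζ ^ n) a b = ((substWord ζ)^[n] [b]).count a := by
  induction n generalizing b with
  | zero =>
      rw [pow_zero]
      simp [Matrix.one_apply, List.count_singleton', eq_comm]
  | succ n ih =>
      rw [pow_succ, Matrix.mul_apply]
      have h1 : (substWord ζ)^[n + 1] [b] = (ζ b).flatMap fun c => (substWord ζ)^[n] [c] := by
        rw [Function.iterate_succ_apply, substWord_singleton, substWord_iterate_flatMap]
      rw [h1, count_flatMap]
      refine Finset.sum_congr rfl fun c _ => ?_
      rw [ih c]
      show ((substWord ζ)^[n] [c]).count a * substMatrixNat ζ c b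
          = (ζ b).count c * ((substWord ζ)^[n] [c]).count a
      rw [show substMatrixNat ζ c b = (ζ b).count c from rfl, Nat.mul_comm]

lemma sum_count_length (l : List (Fin m)) : ∑ a : Fin m, l.count a = l.length := by
  induction l with
  | nil => simp
  | cons x l ih =>
      have hb : ∀ b : Fin m, List.count b (x :: l) = List.count b l + (if x = b then 1 else 0) := by
        intro b; rw [List.count_cons]; simp
      rw [Finset.sum_congr rfl fun b _ => hb b, Finset.sum_add_distrib, ih,
        Finset.sum_ite_eq Finset.univ x (fun _ => 1)]
      simp

lemma two_le_q {q : ℕ} (hm : 2 ≤ m) (ζ : Fin m → List (Fin m)) (hlen : ∀ a, (ζ a).length = q)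
    (hprim : IsPrimitive ζ) : 2 ≤ q := by
  obtain ⟨n, hn⟩ := hprim
  have h0m : 0 < m := by omega
  set b : Fin m := ⟨0, h0m⟩ with hbdef
  have hsum : ∑ a : Fin m, (substMatrixNat ζ ^ n) a b = q ^ n := by
    calc ∑ a : Fin m, (substMatrixNat ζ ^ n) a b
        = ∑ a : Fin m, ((substWord ζ)^[n] [b]).count a :=
          Finset.sum_congr rfl fun a _ => substMatrixNat_pow_apply ζ n a b
      _ = ((substWord ζ)^[n] [b]).length := sum_count_length _
      _ = q ^ n * [b].length := substWord_iterate_length ζ hlen n [b]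
      _ = q ^ n := by simp
  have hm' : m ≤ q ^ n := by
    calc m = ∑ _a : Fin m, 1 := by simp
      _ ≤ ∑ a : Fin m, (substMatrixNat ζ ^ n) a b := Finset.sum_le_sum fun a _ => hn a b
      _ = q ^ n := hsum
  by_contra hq
  push_neg at hq
  have : q ^ n ≤ 1 := by
    calc q ^ n ≤ 1 ^ n := Nat.pow_le_pow_left (by omega) n
      _ = 1 := one_pow n
  omega

end PureBase
set_option maxHeartbeats 1000000

namespace PureBase

variable {m : ℕ}

/-! ### Window machinery -/

def wordOfT (ζ : Fin m → List (Fin m)) {t : ℕ} (v : Fin t → Fin m) : List (Fin m) :=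
  (List.ofFn v).flatMap ζ

def winT (ζ : Fin m → List (Fin m)) (d : Fin m) {t : ℕ} (v : Fin t → Fin m) (r : ℕ) :
    Fin t → Fin m := fun i => (wordOfT ζ v).getD (r + i) d

def KT (ζ : Fin m → List (Fin m)) (d : Fin m) (q t : ℕ) :
    Matrix (Fin t → Fin m) (Fin t → Fin m) ℂ :=
  Matrix.of fun y v => (((Finset.range q).filter fun r => winT ζ d v r = y).card : ℂ)

lemma length_wordOfT {q : ℕ} (ζ : Fin m → List (Fin m)) (hlen : ∀ a, (ζ a).length = q)
    {t : ℕ} (v : Fin t → Fin m) : (wordOfT ζ v).length = q * t := by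
  have h1 : (substWord ζ (List.ofFn v)).length = q * (List.ofFn v).length :=
    substWord_length ζ hlen (List.ofFn v)
  simpa [wordOfT, substWord, List.length_ofFn] using h1

lemma getD_wordOfT {q : ℕ} (ζ : Fin m → List (Fin m)) (hlen : ∀ a, (ζ a).length = q)
    {t : ℕ} (v : Fin t → Fin m) (d : Fin m) (a b : ℕ) (ha : a < t) (hb : b < q) :
    (wordOfT ζ v).getD (q * a + b) d = (ζ (v ⟨a, ha⟩)).getD b d := by
  have h1 := getD_flatMap ζ hlen d (List.ofFn v) a b
    (by rw [List.length_ofFn]; exact ha) hb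
  rw [wordOfT, h1]
  congr 2
  rw [List.getD_eq_getElem _ _ (by rw [List.length_ofFn]; exact ha)]
  simp

lemma wordOfT_succ (ζ : Fin m → List (Fin m)) {t : ℕ} (v : Fin (t + 1) → Fin m) :
    wordOfT ζ v = wordOfT ζ (Fin.init v) ++ ζ (v (Fin.last t)) := by
  rw [wordOfT, List.ofFn_succ', List.concat_eq_append, List.flatMap_append]
  have h1 : [v (Fin.last t)].flatMap ζ = ζ (v (Fin.last t)) := by simp
  rw [h1]
  rfl

lemma getD_wordOfT_init {q : ℕ} (ζ : Fin m → List (Fin m)) (hlen : ∀ a, (ζ a).length = q)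
    {t : ℕ} (v : Fin (t + 1) → Fin m) (d : Fin m) (idx : ℕ) (hidx : idx < q * t) :
    (wordOfT ζ v).getD idx d = (wordOfT ζ (Fin.init v)).getD idx d := by
  rw [wordOfT_succ ζ v,
    List.getD_append _ _ _ _ (by rw [length_wordOfT ζ hlen]; exact hidx)]

lemma KT_apply_sum (ζ : Fin m → List (Fin m)) (d : Fin m) (q t : ℕ)
    (y v : Fin t → Fin m) :
    KT ζ d q t y v = ∑ r ∈ Finset.range q, (if winT ζ d v r = y then (1 : ℂ) else 0) := by
  show (((Finset.range q).filter fun r => winT ζ d v r = y).card : ℂ) = _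
  rw [Finset.card_filter]
  push_cast
  rfl

/-- The key spectral reduction: eigenvalues of the `t`-window matrix that are not `0` and not
roots of unity are eigenvalues of the substitution matrix. -/
lemma claimK {q : ℕ} (hm : 2 ≤ m) (hq : 2 ≤ q) (ζ : Fin m → List (Fin m))
    (hlen : ∀ a, (ζ a).length = q) (d : Fin m) (θ : ℂ) (hθ0 : θ ≠ 0)
    (hθ1 : ∀ n : ℕ, 1 ≤ n → θ ^ n ≠ 1) :
    ∀ t : ℕ, 1 ≤ t → ∀ x : (Fin t → Fin m) → ℂ, x ≠ 0 →
      (KT ζ d q t).mulVec x = θ • x →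
      ∃ v : Fin m → ℂ, v ≠ 0 ∧ (substMatrixC ζ).mulVec v = θ • v := by
  intro t ht
  induction t, ht using Nat.le_induction with
  | base =>
      intro x hx0 hKx
      have hword : ∀ v : Fin 1 → Fin m, wordOfT ζ v = ζ (v 0) := by
        intro v; simp [wordOfT, List.ofFn_succ]
      have hK1 : ∀ y v : Fin 1 → Fin m, KT ζ d q 1 y v = ((ζ (v 0)).count (y 0) : ℂ) := by
        intro y v
        have hwin : ∀ r ∈ Finset.range q,
            (winT ζ d v r = y) ↔ ((ζ (v 0)).getD r d = y 0) := by
          intro r _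
          constructor
          · intro hw
            have h2 := congrFun hw 0
            simpa [winT, hword] using h2
          · intro hr
            funext i
            have hi0 : i = 0 := Subsingleton.elim i 0
            subst hi0
            simpa [winT, hword] using hr
        show (((Finset.range q).filter fun r => winT ζ d v r = y).card : ℂ) = _
        rw [Finset.filter_congr hwin, ← hlen (v 0), count_filter_getD]
      refine ⟨fun b => x (fun _ => b), ?_, ?_⟩
      · obtain ⟨v0, hv0⟩ := Function.ne_iff.mp hx0
        intro hcon
        apply hv0
        have hv0e : v0 = fun _ : Fin 1 => v0 0 := funext fun i => by
          rw [Subsingleton.elim i (0 : Fin 1)]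
        rw [hv0e]
        exact congrFun hcon (v0 0)
      · funext a
        let e : Fin m ≃ (Fin 1 → Fin m) :=
          ⟨fun b _ => b, fun v => v 0, fun b => rfl,
            fun v => funext fun i => by rw [Subsingleton.elim i (0 : Fin 1)]⟩
        have he : ∀ b : Fin m, e b = fun _ : Fin 1 => b := fun b => rfl
        calc (substMatrixC ζ).mulVec (fun b => x fun _ => b) a
            = ∑ b : Fin m, ((ζ b).count a : ℂ) * x (fun _ => b) := by
              simp [Matrix.mulVec, dotProduct, substMatrixC]
          _ = ∑ v : Fin 1 → Fin m, KT ζ d q 1 (fun _ => a) v * x v := by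
              rw [← Equiv.sum_comp e (fun v => KT ζ d q 1 (fun _ => a) v * x v)]
              refine Finset.sum_congr rfl fun b _ => ?_
              rw [he b, hK1]
          _ = ((KT ζ d q 1).mulVec x) (fun _ => a) := by
              simp [Matrix.mulVec, dotProduct]
          _ = θ * x (fun _ => a) := by rw [hKx]; simp
  | succ t ht ih =>
      intro x hx0 hKx
      classical
      let e : ((Fin t → Fin m) × Fin m) ≃ (Fin (t + 1) → Fin m) :=
        { toFun := fun p => Fin.snoc p.1 p.2
          invFun := fun v => (Fin.init v, v (Fin.last t))
          left_inv := fun p => by simp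
          right_inv := fun v => by simp }
      let Lx : (Fin t → Fin m) → ℂ := fun v' => ∑ a : Fin m, x (Fin.snoc v' a)
      by_cases hL : Lx = 0
      · -- kernel case
        rcases Nat.lt_or_ge t 2 with ht2 | ht2
        · -- t = 1 : functional-matrix case
          have ht1 : t = 1 := by omega
          subst ht1
          -- the boundary map on 2-windows
          let g : (Fin 2 → Fin m) → (Fin 2 → Fin m) :=
            fun v => ![(ζ (v 0)).getD (q - 1) d, (ζ (v 1)).getD 0 d]
          have hword2 : ∀ v : Fin 2 → Fin m, wordOfT ζ v = ζ (v 0) ++ ζ (v 1) := by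
            intro v
            simp [wordOfT, List.ofFn_succ]
          have hwin2 : ∀ v : Fin 2 → Fin m, winT ζ d v (q - 1) = g v := by
            intro v
            funext i
            rcases i with ⟨iv, hiv⟩
            interval_cases iv
            · show (wordOfT ζ v).getD (q - 1 + ((⟨0, hiv⟩ : Fin 2) : ℕ)) d = g v ⟨0, hiv⟩
              rw [show ((⟨0, hiv⟩ : Fin 2) : ℕ) = 0 from rfl, Nat.add_zero, hword2,
                List.getD_append _ _ _ _ (by rw [hlen]; omega)]
              rfl
            · show (wordOfT ζ v).getD (q - 1 + ((⟨1, hiv⟩ : Fin 2) : ℕ)) d = g v ⟨1, hiv⟩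
              rw [show ((⟨1, hiv⟩ : Fin 2) : ℕ) = 1 from rfl,
                show q - 1 + 1 = q by omega, hword2,
                List.getD_append_right _ _ _ _ (by rw [hlen])]
              rw [hlen, Nat.sub_self]
              rfl
        -- (proof continues below)
          have hwin2' : ∀ (v : Fin 2 → Fin m) (r : ℕ), r < q - 1 →
              ∀ i : Fin 2, winT ζ d v r i = (wordOfT ζ (Fin.init v)).getD (r + i) d := by
            intro v r hr i
            show (wordOfT ζ v).getD (r + (i : ℕ)) d = _
            exact getD_wordOfT_init ζ hlen v d _
              (by have := i.isLt; simp only [Nat.mul_one]; omega)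
          -- the eigenvector equation becomes the one of the functional matrix of g
          have hMg : ∀ w : Fin 2 → Fin m,
              ∑ v : Fin 2 → Fin m, (if g v = w then x v else 0) = θ * x w := by
            intro w
            have h1 := congrFun hKx w
            have h2 : ((KT ζ d q 2).mulVec x) w
                = ∑ v : Fin 2 → Fin m, ∑ r ∈ Finset.range q,
                    (if winT ζ d v r = w then x v else 0) := by
              simp only [Matrix.mulVec, dotProduct]
              refine Finset.sum_congr rfl fun v _ => ?_
              rw [KT_apply_sum, Finset.sum_mul]
              exact Finset.sum_congr rfl fun r _ => by split <;> simp
            have h3 : ∀ v : Fin 2 → Fin m, ∑ r ∈ Finset.range q,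
                (if winT ζ d v r = w then x v else 0)
                = (∑ r ∈ Finset.range (q - 1), (if winT ζ d v r = w then x v else 0))
                  + (if g v = w then x v else 0) := by
              intro v
              rw [show q = (q - 1) + 1 by omega, Finset.sum_range_succ]
              rw [show q - 1 + 1 - 1 = q - 1 by omega]
              rw [hwin2 v]
            have h4 : ∑ v : Fin 2 → Fin m, ∑ r ∈ Finset.range (q - 1),
                (if winT ζ d v r = w then x v else 0) = 0 := by
              rw [Finset.sum_comm]
              refine Finset.sum_eq_zero fun r hr => ?_
              have hr' : r < q - 1 := Finset.mem_range.mp hr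
              rw [← Equiv.sum_comp e (fun v => if winT ζ d v r = w then x v else 0)]
              have hsp : ∀ p : (Fin 1 → Fin m) × Fin m,
                  (if winT ζ d (e p) r = w then x (e p) else 0)
                  = (if (fun i : Fin 2 => (wordOfT ζ p.1).getD (r + i) d) = w
                      then x (Fin.snoc p.1 p.2) else 0) := by
                intro p
                have hie : winT ζ d (e p) r
                    = fun i : Fin 2 => (wordOfT ζ p.1).getD (r + i) d := by
                  funext i
                  rw [hwin2' (e p) r hr' i]
                  have hep : e p = Fin.snoc p.1 p.2 := rfl
                  rw [hep, Fin.init_snoc]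
                rw [hie]
                rfl
              rw [Finset.sum_congr rfl fun p _ => hsp p, Fintype.sum_prod_type]
              refine Finset.sum_eq_zero fun v' _ => ?_
              by_cases hc : (fun i : Fin 2 => (wordOfT ζ v').getD (r + i) d) = w
              · rw [Finset.sum_congr rfl fun a _ => if_pos hc]
                simpa using congrFun hL v'
              · rw [Finset.sum_congr rfl fun a _ => if_neg hc]
                simp
            rw [h2] at h1
            rw [Finset.sum_congr rfl fun v _ => h3 v, Finset.sum_add_distrib, h4,
              zero_add] at h1
            rw [h1]
            simp
          -- iterate the functional identity
          have hFn : ∀ (n : ℕ) (w : Fin 2 → Fin m),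
              ∑ v : Fin 2 → Fin m, (if g^[n] v = w then x v else 0) = θ ^ n * x w := by
            intro n
            induction n with
            | zero =>
                intro w
                simp only [Function.iterate_zero, id_eq, pow_zero, one_mul]
                refine (Finset.sum_ite_eq' Finset.univ w x).trans ?_
                simp
            | succ n ihn =>
                intro w
                have hstep : ∀ v, g^[n + 1] v = g^[n] (g v) := fun v =>
                  Function.iterate_succ_apply g n v
                calc ∑ v : Fin 2 → Fin m, (if g^[n + 1] v = w then x v else 0)
                    = ∑ v : Fin 2 → Fin m,
                        (if g^[n] (g v) = w then (1 : ℂ) else 0) * x v := by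
                      refine Finset.sum_congr rfl fun v _ => ?_
                      rw [hstep v]; split <;> simp
                  _ = ∑ u : Fin 2 → Fin m, (if g^[n] u = w then (1 : ℂ) else 0) *
                        ∑ v : Fin 2 → Fin m, (if g v = u then x v else 0) :=
                      sum_group Finset.univ g (fun u => if g^[n] u = w then (1 : ℂ) else 0) x
                  _ = ∑ u : Fin 2 → Fin m, (if g^[n] u = w then (1 : ℂ) else 0) * (θ * x u) := by
                      refine Finset.sum_congr rfl fun u _ => by rw [hMg u]
                  _ = θ * ∑ u : Fin 2 → Fin m, (if g^[n] u = w then x u else 0) := by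
                      rw [Finset.mul_sum]
                      refine Finset.sum_congr rfl fun u _ => by split <;> simp <;> ring
                  _ = θ * (θ ^ n * x w) := by rw [ihn w]
                  _ = θ ^ (n + 1) * x w := by ring
          obtain ⟨i, j, hij, hgij⟩ :=
            Finite.exists_ne_map_eq_of_infinite (fun n : ℕ => g^[n])
          obtain ⟨v0, hv0⟩ := Function.ne_iff.mp hx0
          have hvij : ∀ w, θ ^ i * x w = θ ^ j * x w := fun w => by
            rw [← hFn i w, ← hFn j w, hgij]
          have hθij : θ ^ i = θ ^ j := mul_right_cancel₀ hv0 (hvij v0)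
          exfalso
          rcases Nat.lt_or_ge i j with hlt | hge
          · exact pow_mul_ne θ hθ0 hθ1 hlt (1 : ℂ) one_ne_zero (by
              rw [mul_one, mul_one]; exact hθij)
          · exact pow_mul_ne θ hθ0 hθ1 (by omega : j < i) (1 : ℂ) one_ne_zero (by
              rw [mul_one, mul_one]; exact hθij.symm)
        · -- t ≥ 2 : the matrix kills the kernel
          exfalso
          have hzero : (KT ζ d q (t + 1)).mulVec x = 0 := by
            funext y
            have h2 : ((KT ζ d q (t + 1)).mulVec x) y
                = ∑ r ∈ Finset.range q, ∑ v : Fin (t + 1) → Fin m,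
                    (if winT ζ d v r = y then x v else 0) := by
              simp only [Matrix.mulVec, dotProduct]
              rw [Finset.sum_comm]
              refine Finset.sum_congr rfl fun v _ => ?_
              rw [KT_apply_sum, Finset.sum_mul]
              exact Finset.sum_congr rfl fun r _ => by split <;> simp
            rw [h2]
            have h3 : ∀ r ∈ Finset.range q, ∑ v : Fin (t + 1) → Fin m,
                (if winT ζ d v r = y then x v else 0) = 0 := by
              intro r hr
              have hr' : r < q := Finset.mem_range.mp hr
              rw [← Equiv.sum_comp e (fun v => if winT ζ d v r = y then x v else 0)]
              have hsp : ∀ p : (Fin t → Fin m) × Fin m,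
                  (if winT ζ d (e p) r = y then x (e p) else 0)
                  = (if (fun i : Fin (t + 1) => (wordOfT ζ p.1).getD (r + i) d) = y
                      then x (Fin.snoc p.1 p.2) else 0) := by
                intro p
                have hie : winT ζ d (e p) r
                    = fun i : Fin (t + 1) => (wordOfT ζ p.1).getD (r + i) d := by
                  funext i
                  show (wordOfT ζ (e p)).getD (r + (i : ℕ)) d = _
                  rw [getD_wordOfT_init ζ hlen (e p) d _
                    (aux_lt2 hq ht2 hr' i.isLt)]
                  have hep : e p = Fin.snoc p.1 p.2 := rfl
                  rw [hep, Fin.init_snoc]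
                rw [hie]
                rfl
              rw [Finset.sum_congr rfl fun p _ => hsp p, Fintype.sum_prod_type]
              refine Finset.sum_eq_zero fun v' _ => ?_
              by_cases hc : (fun i : Fin (t + 1) => (wordOfT ζ v').getD (r + i) d) = y
              · rw [Finset.sum_congr rfl fun a _ => if_pos hc]
                simpa using congrFun hL v'
              · rw [Finset.sum_congr rfl fun a _ => if_neg hc]
                simp
            rw [Finset.sum_eq_zero h3]
            rfl
          rw [hzero] at hKx
          rcases smul_eq_zero.mp hKx.symm with h | h
          · exact hθ0 h
          · exact hx0 h
      · -- intertwining case : push down to t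
        apply ih Lx hL
        funext y'
        have key : ∀ v : Fin (t + 1) → Fin m,
            KT ζ d q t y' (Fin.init v)
              = ∑ y : Fin (t + 1) → Fin m,
                  (if Fin.init y = y' then KT ζ d q (t + 1) y v else 0) := by
          intro v
          have h1 : ∀ y : Fin (t + 1) → Fin m,
              (if Fin.init y = y' then KT ζ d q (t + 1) y v else 0)
              = ∑ r ∈ Finset.range q,
                  (if winT ζ d v r = y then (if Fin.init y = y' then (1 : ℂ) else 0) else 0) := by
            intro y
            by_cases hy : Fin.init y = y'
            · rw [if_pos hy, KT_apply_sum]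
              exact Finset.sum_congr rfl fun r _ => by rw [if_pos hy]
            · rw [if_neg hy]
              symm
              refine Finset.sum_eq_zero fun r _ => ?_
              rw [if_neg hy]
              split <;> rfl
          rw [Finset.sum_congr rfl fun y _ => h1 y, Finset.sum_comm]
          have h2 : ∀ r ∈ Finset.range q,
              (∑ y : Fin (t + 1) → Fin m,
                (if winT ζ d v r = y then (if Fin.init y = y' then (1 : ℂ) else 0) else 0))
              = (if winT ζ d (Fin.init v) r = y' then (1 : ℂ) else 0) := by
            intro r hr
            have hr' : r < q := Finset.mem_range.mp hr
            rw [Finset.sum_ite_eq Finset.univ (winT ζ d v r)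
              (fun y => if Fin.init y = y' then (1 : ℂ) else 0)]
            simp only [Finset.mem_univ, if_pos]
            have hinit : Fin.init (winT ζ d v r) = winT ζ d (Fin.init v) r := by
              funext i
              show (wordOfT ζ v).getD (r + ((Fin.castSucc i : Fin (t + 1)) : ℕ)) d
                = (wordOfT ζ (Fin.init v)).getD (r + (i : ℕ)) d
              rw [Fin.coe_castSucc]
              exact getD_wordOfT_init ζ hlen v d _
                (aux_lt (by omega) ht hr' i.isLt)
            rw [hinit]
          rw [Finset.sum_congr rfl h2, KT_apply_sum]
        calc ((KT ζ d q t).mulVec Lx) y'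
            = ∑ v' : Fin t → Fin m, KT ζ d q t y' v' * ∑ a : Fin m, x (Fin.snoc v' a) := by
              simp only [Matrix.mulVec, dotProduct]
              rfl
          _ = ∑ v' : Fin t → Fin m, ∑ a : Fin m, KT ζ d q t y' v' * x (Fin.snoc v' a) := by
              exact Finset.sum_congr rfl fun v' _ => Finset.mul_sum _ _ _
          _ = ∑ p : (Fin t → Fin m) × Fin m, KT ζ d q t y' p.1 * x (Fin.snoc p.1 p.2) :=
              (Fintype.sum_prod_type
                (f := fun p : (Fin t → Fin m) × Fin m =>
                  KT ζ d q t y' p.1 * x (Fin.snoc p.1 p.2))).symm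
          _ = ∑ v : Fin (t + 1) → Fin m, KT ζ d q t y' (Fin.init v) * x v := by
              rw [← Equiv.sum_comp e (fun v => KT ζ d q t y' (Fin.init v) * x v)]
              refine Finset.sum_congr rfl fun p _ => ?_
              have hep : e p = Fin.snoc p.1 p.2 := rfl
              rw [hep, Fin.init_snoc]
          _ = ∑ v : Fin (t + 1) → Fin m,
                ∑ y : Fin (t + 1) → Fin m,
                  (if Fin.init y = y' then KT ζ d q (t + 1) y v * x v else 0) := by
              refine Finset.sum_congr rfl fun v _ => ?_
              rw [key v, Finset.sum_mul]
              exact Finset.sum_congr rfl fun y _ => by split <;> simp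
          _ = ∑ y : Fin (t + 1) → Fin m,
                (if Fin.init y = y' then ((KT ζ d q (t + 1)).mulVec x) y else 0) := by
              rw [Finset.sum_comm]
              refine Finset.sum_congr rfl fun y _ => ?_
              split
              · simp only [Matrix.mulVec, dotProduct]
              · exact Finset.sum_eq_zero fun v _ => rfl
          _ = ∑ y : Fin (t + 1) → Fin m, (if Fin.init y = y' then θ * x y else 0) := by
              refine Finset.sum_congr rfl fun y _ => ?_
              rw [hKx]
              split <;> simp
          _ = θ * ∑ y : Fin (t + 1) → Fin m, (if Fin.init y = y' then x y else 0) := by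
              rw [Finset.mul_sum]
              exact Finset.sum_congr rfl fun y _ => by split <;> simp
          _ = θ * Lx y' := by
              congr 1
              rw [← Equiv.sum_comp e (fun y => if Fin.init y = y' then x y else 0),
                Fintype.sum_prod_type]
              have : ∀ y'' : Fin t → Fin m, ∀ a : Fin m,
                  (if Fin.init (e (y'', a)) = y' then x (e (y'', a)) else 0)
                  = (if y'' = y' then x (Fin.snoc y'' a) else 0) := by
                intro y'' a
                have hep : e (y'', a) = Fin.snoc y'' a := rfl
                rw [hep, Fin.init_snoc]
              rw [Finset.sum_congr rfl fun y'' _ =>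
                Finset.sum_congr rfl fun a _ => this y'' a]
              have : ∀ y'' : Fin t → Fin m,
                  (∑ a : Fin m, if y'' = y' then x (Fin.snoc y'' a) else 0)
                  = (if y'' = y' then ∑ a : Fin m, x (Fin.snoc y'' a) else 0) := by
                intro y''
                split <;> simp
              rw [Finset.sum_congr rfl fun y'' _ => this y'',
                Finset.sum_ite_eq' Finset.univ y'
                  (fun y'' => ∑ a : Fin m, x (Fin.snoc y'' a))]
              simp only [Finset.mem_univ, if_pos]
              rfl
          _ = (θ • Lx) y' := by simp

end PureBase
namespace PureBase

/-! ### Eigenvalue / determinant bridges -/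

lemma eig_iff_det {n : Type*} [Fintype n] [DecidableEq n] (A : Matrix n n ℂ) (θ : ℂ) :
    (∃ v : n → ℂ, v ≠ 0 ∧ A.mulVec v = θ • v)
      ↔ (θ • (1 : Matrix n n ℂ) - A).det = 0 := by
  rw [← Matrix.exists_mulVec_eq_zero_iff]
  constructor
  · rintro ⟨v, hv0, hv⟩
    exact ⟨v, hv0, by
      rw [Matrix.sub_mulVec, Matrix.smul_mulVec, Matrix.one_mulVec, hv, sub_self]⟩
  · rintro ⟨v, hv0, hv⟩
    refine ⟨v, hv0, ?_⟩
    rw [Matrix.sub_mulVec, Matrix.smul_mulVec, Matrix.one_mulVec] at hv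
    exact (sub_eq_zero.mp hv).symm

lemma eig_transpose {n : Type*} [Fintype n] [DecidableEq n] (A : Matrix n n ℂ) (θ : ℂ) :
    (∃ v : n → ℂ, v ≠ 0 ∧ A.transpose.mulVec v = θ • v)
      ↔ (∃ v : n → ℂ, v ≠ 0 ∧ A.mulVec v = θ • v) := by
  have h1 : θ • (1 : Matrix n n ℂ) - A.transpose = (θ • (1 : Matrix n n ℂ) - A).transpose := by
    rw [Matrix.transpose_sub, Matrix.transpose_smul, Matrix.transpose_one]
  rw [eig_iff_det, eig_iff_det, h1, Matrix.det_transpose]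

lemma sum_matrix_mulVec {n : Type*} [Fintype n] {ι : Type*}
    (s : Finset ι) (f : ι → Matrix n n ℂ) (x : n → ℂ) :
    (∑ i ∈ s, f i).mulVec x = ∑ i ∈ s, (f i).mulVec x := by
  classical
  induction s using Finset.induction_on with
  | empty => simp [Matrix.zero_mulVec]
  | insert _ _ hnot ih =>
      rw [Finset.sum_insert hnot, Finset.sum_insert hnot, Matrix.add_mulVec, ih]

lemma dot_sum {n : Type*} [Fintype n] {ι : Type*} (s : Finset ι) (R : n → ℂ)
    (f : ι → n → ℂ) :
    dotProduct R (∑ i ∈ s, f i) = ∑ i ∈ s, dotProduct R (f i) := by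
  classical
  induction s using Finset.induction_on with
  | empty => simp
  | insert _ _ hnot ih =>
      rw [Finset.sum_insert hnot, Finset.sum_insert hnot, dotProduct_add, ih]

/-- If `R (Aⁱ x) = θⁱ β` for all `i`, with `β ≠ 0`, then `θ` is a root of the characteristic
polynomial of `A`, hence an eigenvalue. -/
lemma geom_charpoly_root {n : Type*} [Fintype n] [DecidableEq n] (A : Matrix n n ℂ)
    (R x : n → ℂ) (θ β : ℂ) (hβ : β ≠ 0)
    (hseq : ∀ i : ℕ, dotProduct R ((A ^ i).mulVec x) = θ ^ i * β) :
    ∃ v : n → ℂ, v ≠ 0 ∧ A.mulVec v = θ • v := by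
  classical
  set p := A.charpoly with hp
  have h0 : (Polynomial.aeval A) p = 0 := Matrix.aeval_self_charpoly A
  have h2 : dotProduct R (((Polynomial.aeval A) p).mulVec x) = p.eval θ * β := by
    rw [Polynomial.aeval_eq_sum_range, sum_matrix_mulVec, dot_sum]
    have hterm : ∀ i ∈ Finset.range (p.natDegree + 1),
        dotProduct R ((p.coeff i • A ^ i).mulVec x) = p.coeff i * (θ ^ i * β) := by
      intro i _
      rw [Matrix.smul_mulVec, dotProduct_smul, hseq i]
      simp [smul_eq_mul]
    rw [Finset.sum_congr rfl hterm, Polynomial.eval_eq_sum_range, Finset.sum_mul]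
    exact Finset.sum_congr rfl fun i _ => by ring
  have hev : p.eval θ = 0 := by
    have h3 : p.eval θ * β = 0 := by
      rw [← h2, h0, Matrix.zero_mulVec, dotProduct_zero]
    rcases mul_eq_zero.mp h3 with hz | hz
    · exact hz
    · exact absurd hz hβ
  have hmap : (Matrix.charmatrix A).map (Polynomial.eval θ) = θ • (1 : Matrix n n ℂ) - A := by
    ext i j
    by_cases hij : i = j
    · subst hij
      rw [Matrix.map_apply, Matrix.charmatrix_apply_eq]
      simp [Matrix.one_apply]
    · rw [Matrix.map_apply, Matrix.charmatrix_apply_ne _ _ _ hij]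
      simp [Matrix.one_apply, hij]
  have hdet : (θ • (1 : Matrix n n ℂ) - A).det = 0 := by
    have h4 : p.eval θ = ((Matrix.charmatrix A).map (Polynomial.eval θ)).det := by
      rw [hp, Matrix.charpoly]
      exact RingHom.map_det (Polynomial.evalRingHom θ) (Matrix.charmatrix A)
    rw [← hmap, ← h4]
    exact hev
  exact (eig_iff_det A θ).mpr hdet

end PureBase
namespace PureBase

variable {m : ℕ}

lemma list_range_mul {α : Type*} (f : ℕ → α) (a b : ℕ) :
    (List.range (a * b)).map f
      = (List.range a).flatMap fun r => (List.range b).map fun s => f (b * r + s) := by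
  induction a with
  | zero => simp
  | succ a ih =>
      rw [List.range_succ, List.flatMap_append, ← ih,
        show (a + 1) * b = a * b + b by ring, List.range_add, List.map_append,
        List.map_map]
      congr 1
      simp only [List.flatMap_cons, List.flatMap_nil, List.append_nil]
      refine congrArg (fun g => List.map g (List.range b)) (funext fun s => ?_)
      show f (a * b + s) = f (b * a + s)
      rw [Nat.mul_comm a b]

lemma fixedpoint_seg {q : ℕ} (ζ : Fin m → List (Fin m)) (hlen : ∀ a, (ζ a).length = q)
    (U : ℕ → Fin m) (hU : ∀ i r : ℕ, r < q → U (q * i + r) = (ζ (U i)).getD r (U 0)) :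
    ∀ (n p : ℕ), (substWord ζ)^[n] [U p]
      = (List.range (q ^ n)).map fun s => U (q ^ n * p + s) := by
  intro n
  induction n with
  | zero =>
      intro p
      rw [pow_zero, show List.range 1 = [0] from rfl]
      simp
  | succ n ih =>
      intro p
      have hζU : ∀ p' : ℕ, ζ (U p') = (List.range q).map fun r => U (q * p' + r) := by
        intro p'
        apply List.ext_getElem (by simp [hlen])
        intro r h1 h2
        have hr : r < q := by rwa [hlen] at h1
        simp only [List.getElem_map, List.getElem_range]
        rw [hU p' r hr, List.getD_eq_getElem _ _ h1]
      calc (substWord ζ)^[n + 1] [U p]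
          = (substWord ζ)^[n] (substWord ζ [U p]) := Function.iterate_succ_apply _ _ _
        _ = (substWord ζ)^[n] (ζ (U p)) := by rw [substWord_singleton]
        _ = (ζ (U p)).flatMap fun b => (substWord ζ)^[n] [b] :=
            substWord_iterate_flatMap ζ n _
        _ = ((List.range q).map fun r => U (q * p + r)).flatMap
              fun b => (substWord ζ)^[n] [b] := by rw [hζU p]
        _ = (List.range q).flatMap fun r => (substWord ζ)^[n] [U (q * p + r)] := by
            rw [List.flatMap_map]
        _ = (List.range q).flatMap fun r =>
              (List.range (q ^ n)).map fun s => U (q ^ n * (q * p + r) + s) := by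
            refine congrArg (fun f => (List.range q).flatMap f) (funext fun r => ?_)
            exact ih (q * p + r)
        _ = (List.range (q ^ (n + 1))).map fun s => U (q ^ (n + 1) * p + s) := by
            rw [show q ^ (n + 1) = q * q ^ n from pow_succ' q n, list_range_mul]
            refine congrArg (fun f => (List.range q).flatMap f) (funext fun r => ?_)
            refine congrArg (fun g => List.map g (List.range (q ^ n)))
              (funext fun s => ?_)
            congr 1
            ring

lemma letter_occurs {q : ℕ} (ζ : Fin m → List (Fin m)) (hlen : ∀ a, (ζ a).length = q)
    (hprim : IsPrimitive ζ) (U : ℕ → Fin m)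
    (hU : ∀ i r : ℕ, r < q → U (q * i + r) = (ζ (U i)).getD r (U 0)) (a : Fin m) :
    ∃ p, U p = a := by
  obtain ⟨n, hn⟩ := hprim
  have h1 : 0 < ((substWord ζ)^[n] [U 0]).count a := by
    rw [← substMatrixNat_pow_apply]
    exact hn a (U 0)
  have h2 : a ∈ (substWord ζ)^[n] [U 0] := List.count_pos_iff.mp h1
  rw [fixedpoint_seg ζ hlen U hU n 0] at h2
  obtain ⟨s, _, hs⟩ := List.mem_map.mp h2
  exact ⟨q ^ n * 0 + s, hs⟩

lemma gamma_lemma {q h : ℕ} (ζ : Fin m → List (Fin m)) (hlen : ∀ a, (ζ a).length = q)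
    (hprim : IsPrimitive ζ) (U : ℕ → Fin m)
    (hU : ∀ i r : ℕ, r < q → U (q * i + r) = (ζ (U i)).getD r (U 0))
    (hcop : Nat.Coprime h q)
    (hdvd : ∀ k : ℕ, 1 ≤ k → U k = U 0 → h ∣ k) :
    ∀ p p' : ℕ, U p = U p' → p % h = p' % h := by
  intro p p' hpp
  obtain ⟨n, hn⟩ := hprim
  have h1 : 0 < ((substWord ζ)^[n] [U p]).count (U 0) := by
    rw [← substMatrixNat_pow_apply]
    exact hn (U 0) (U p)
  have h2 : U 0 ∈ (substWord ζ)^[n] [U p] := List.count_pos_iff.mp h1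
  rw [fixedpoint_seg ζ hlen U hU n p] at h2
  obtain ⟨s, hsmem, hs⟩ := List.mem_map.mp h2
  have hslt : s < q ^ n := List.mem_range.mp hsmem
  -- the same `s` works for `p'`
  have hlists : (List.range (q ^ n)).map (fun s => U (q ^ n * p + s))
      = (List.range (q ^ n)).map (fun s => U (q ^ n * p' + s)) := by
    rw [← fixedpoint_seg ζ hlen U hU n p, ← fixedpoint_seg ζ hlen U hU n p', hpp]
  have hget : ∀ w : ℕ → Fin m,
      ((List.range (q ^ n)).map (fun j => w j)).getD s (U 0) = w s := by
    intro w
    rw [List.getD_eq_getElem _ _ (by simpa using hslt)]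
    simp
  have hs' : U (q ^ n * p' + s) = U 0 := by
    have hgd := congrArg (fun l => l.getD s (U 0)) hlists
    rw [hget (fun j => U (q ^ n * p + j)), hget (fun j => U (q ^ n * p' + j))] at hgd
    rw [← hgd]
    exact hs
  have hd1 : h ∣ q ^ n * p + s := by
    rcases Nat.eq_zero_or_pos (q ^ n * p + s) with h0 | hpos
    · rw [h0]; exact Dvd.intro 0 rfl
    · exact hdvd _ hpos hs
  have hd2 : h ∣ q ^ n * p' + s := by
    rcases Nat.eq_zero_or_pos (q ^ n * p' + s) with h0 | hpos
    · rw [h0]; exact Dvd.intro 0 rfl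
    · exact hdvd _ hpos hs'
  have hmod : q ^ n * p ≡ q ^ n * p' [MOD h] := by
    have e1 : q ^ n * p + s ≡ q ^ n * p' + s [MOD h] :=
      ((Nat.modEq_zero_iff_dvd).mpr hd1).trans ((Nat.modEq_zero_iff_dvd).mpr hd2).symm
    exact Nat.ModEq.add_right_cancel' s e1
  have hco : h.gcd (q ^ n) = 1 := hcop.pow_right n
  exact Nat.ModEq.cancel_left_of_coprime hco hmod

end PureBase
namespace PureBase

/-- Forward direction: a (left) eigenvalue of `S_ζ` that is neither `0` nor a root of unity
is an eigenvalue of `S_η`. -/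
lemma forward_dir {m m' q h : ℕ} (hh : 2 ≤ h)
    (ζ : Fin m → List (Fin m)) (hlen : ∀ a, (ζ a).length = q)
    (hprim : IsPrimitive ζ)
    (U : ℕ → Fin m) (hU : ∀ i r : ℕ, r < q → U (q * i + r) = (ζ (U i)).getD r (U 0))
    (η : Fin m' → List (Fin m')) (hlen' : ∀ c, (η c).length = q)
    (φ : Fin m' → List (Fin m))
    (V : ℕ → Fin m')
    (hV : ∀ i r : ℕ, r < q → V (q * i + r) = (η (V i)).getD r (V 0))
    (hcode : ∀ k r : ℕ, r < h → U (h * k + r) = (φ (V k)).getD r (U 0))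
    (θ : ℂ) (hθ0 : θ ≠ 0) (hθ1 : ∀ n : ℕ, 1 ≤ n → θ ^ n ≠ 1)
    (u : Fin m → ℂ) (hu0 : u ≠ 0)
    (hu : (substMatrixC ζ).transpose.mulVec u = θ • u) :
    ∃ w : Fin m' → ℂ, w ≠ 0 ∧ (substMatrixC η).mulVec w = θ • w := by
  classical
  have huc : ∀ b : Fin m, ∑ a : Fin m, ((ζ b).count a : ℂ) * u a = θ * u b := by
    intro b
    have h1 := congrFun hu b
    simpa [Matrix.mulVec, dotProduct, Matrix.transpose_apply, substMatrixC,
      smul_eq_mul] using h1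
  let P : ℕ → ℂ := fun j => ∑ p ∈ Finset.range j, u (U p)
  have hPstep : ∀ p : ℕ, ∑ r ∈ Finset.range q, u (U (q * p + r)) = θ * u (U p) := by
    intro p
    have h1 : ∀ r ∈ Finset.range q, u (U (q * p + r)) = u ((ζ (U p)).getD r (U 0)) :=
      fun r hr => by rw [hU p r (Finset.mem_range.mp hr)]
    rw [Finset.sum_congr rfl h1, ← hlen (U p),
      sum_getD_count (ζ (U p)) (fun b => u b) (U 0)]
    exact huc (U p)
  have hPq : ∀ j, P (q * j) = θ * P j := by
    intro j
    show (∑ p ∈ Finset.range (q * j), u (U p)) = θ * ∑ p ∈ Finset.range j, u (U p)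
    rw [Nat.mul_comm q j, sum_range_mul'' (fun p => u (U p)) j q, Finset.mul_sum]
    exact Finset.sum_congr rfl fun p _ => hPstep p
  have hPqn : ∀ (n j : ℕ), P (q ^ n * j) = θ ^ n * P j := by
    intro n
    induction n with
    | zero => intro j; simp
    | succ n ihn =>
        intro j
        rw [show q ^ (n + 1) * j = q * (q ^ n * j) by ring, hPq, ihn, pow_succ]
        ring
  have hPblock : ∀ k r : ℕ, r < h →
      P (h * k + r) = P (h * k) + ∑ p ∈ Finset.range r, u ((φ (V k)).getD p (U 0)) := by
    intro k r hr
    show (∑ p ∈ Finset.range (h * k + r), u (U p)) = _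
    rw [sum_range_add'' (fun p => u (U p)) (h * k) r]
    congr 1
    exact Finset.sum_congr rfl fun p hp => by
      rw [hcode k p (lt_of_lt_of_le (Finset.mem_range.mp hp) hr.le)]
  by_cases hPh : ∃ k, P (h * k) ≠ 0
  · -- Cayley–Hamilton branch
    obtain ⟨k, hk⟩ := hPh
    let NV : ℕ → Fin m' → ℂ := fun k' c => ∑ i ∈ Finset.range k', (if V i = c then 1 else 0)
    have hinner : ∀ (i : ℕ) (c : Fin m'),
        (∑ r ∈ Finset.range q, if V (q * i + r) = c then (1 : ℂ) else 0)
          = ((η (V i)).count c : ℂ) := by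
      intro i c
      have h1 : ∀ r ∈ Finset.range q, (if V (q * i + r) = c then (1 : ℂ) else 0)
          = (if (η (V i)).getD r (V 0) = c then (1 : ℂ) else 0) := fun r hr => by
        rw [hV i r (Finset.mem_range.mp hr)]
      rw [Finset.sum_congr rfl h1, ← hlen' (V i),
        sum_getD_count (η (V i)) (fun b => if b = c then (1 : ℂ) else 0) (V 0)]
      calc ∑ b : Fin m', ((η (V i)).count b : ℂ) * (if b = c then 1 else 0)
          = ∑ b : Fin m', (if b = c then ((η (V i)).count b : ℂ) else 0) :=
            Finset.sum_congr rfl fun b _ => by split <;> simp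
        _ = ((η (V i)).count c : ℂ) := by
            rw [Finset.sum_ite_eq' Finset.univ c (fun b => ((η (V i)).count b : ℂ))]
            simp
    have hNVq : ∀ k', NV (q * k') = (substMatrixC η).mulVec (NV k') := by
      intro k'
      funext c
      show (∑ i ∈ Finset.range (q * k'), if V i = c then (1 : ℂ) else 0) = _
      rw [Nat.mul_comm q k',
        sum_range_mul'' (fun i => if V i = c then (1 : ℂ) else 0) k' q,
        Finset.sum_congr rfl fun i _ => hinner i c]
      have hg := sum_group (Finset.range k') (fun i => V i)
        (fun c' => ((η c').count c : ℂ)) (fun _ => 1)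
      simp only [mul_one] at hg
      rw [hg]
      simp only [Matrix.mulVec, dotProduct, substMatrixC, Matrix.of_apply]
      rfl
    have hNVqn : ∀ n : ℕ, NV (q ^ n * k) = ((substMatrixC η) ^ n).mulVec (NV k) := by
      intro n
      induction n with
      | zero => simp
      | succ n ihn =>
          rw [show q ^ (n + 1) * k = q * (q ^ n * k) by ring, hNVq, ihn,
            Matrix.mulVec_mulVec, ← pow_succ']
    let Rphi : Fin m' → ℂ := fun c => ∑ p ∈ Finset.range h, u ((φ c).getD p (U 0))
    have hRNV : ∀ k' : ℕ, dotProduct Rphi (NV k') = P (h * k') := by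
      intro k'
      show (∑ c : Fin m', Rphi c * NV k' c) = P (h * k')
      have hg := sum_group (Finset.range k') (fun i => V i) Rphi (fun _ => 1)
      simp only [mul_one] at hg
      rw [← hg]
      show (∑ i ∈ Finset.range k', ∑ p ∈ Finset.range h, u ((φ (V i)).getD p (U 0))) = _
      have h2 : ∀ i ∈ Finset.range k',
          (∑ p ∈ Finset.range h, u ((φ (V i)).getD p (U 0)))
            = ∑ p ∈ Finset.range h, u (U (h * i + p)) := by
        intro i _
        exact Finset.sum_congr rfl fun p hp => by
          rw [hcode i p (Finset.mem_range.mp hp)]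
      rw [Finset.sum_congr rfl h2]
      show _ = ∑ p ∈ Finset.range (h * k'), u (U p)
      rw [Nat.mul_comm h k', sum_range_mul'' (fun p => u (U p)) k' h]
    have hseq : ∀ n : ℕ, dotProduct Rphi (((substMatrixC η) ^ n).mulVec (NV k))
        = θ ^ n * P (h * k) := by
      intro n
      rw [← hNVqn n, hRNV (q ^ n * k), show h * (q ^ n * k) = q ^ n * (h * k) by ring,
        hPqn]
    exact geom_charpoly_root (substMatrixC η) Rphi (NV k) θ (P (h * k)) hk hseq
  · -- pigeonhole branch : impossible
    push_neg at hPh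
    exfalso
    apply hu0
    set S : Finset ℂ := ((Finset.univ : Finset (Fin m')) ×ˢ Finset.range (h + 1)).image
      (fun cr => ∑ p ∈ Finset.range cr.2, u ((φ cr.1).getD p (U 0))) with hS
    have hPmem : ∀ j : ℕ, P j ∈ S := by
      intro j
      have hj : h * (j / h) + j % h = j := Nat.div_add_mod j h
      have hmod : j % h < h := Nat.mod_lt j (by omega)
      rw [← hj, hPblock (j / h) (j % h) hmod, hPh (j / h), zero_add]
      refine Finset.mem_image.mpr ⟨(V (j / h), j % h), ?_, rfl⟩
      rw [Finset.mem_product]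
      exact ⟨Finset.mem_univ _, Finset.mem_range.mpr (by omega)⟩
    have hP0 : ∀ j, P j = 0 := fun j =>
      pigeonhole_zero θ hθ0 hθ1 S (P j) (fun n => by rw [← hPqn n j]; exact hPmem _)
    have hU0 : ∀ p, u (U p) = 0 := by
      intro p
      have h1 : P (p + 1) = P p + u (U p) := Finset.sum_range_succ (fun i => u (U i)) p
      rw [hP0 (p + 1), hP0 p, zero_add] at h1
      exact h1.symm
    funext a
    obtain ⟨p, hp⟩ := letter_occurs ζ hlen hprim U hU a
    rw [← hp, Pi.zero_apply]
    exact hU0 p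

end PureBase
namespace PureBase

/-- Backward direction: a (left) eigenvalue of `S_η` that is neither `0` nor a root of unity
is an eigenvalue of `S_ζ`. -/
lemma backward_dir {m m' q h : ℕ} (hm : 2 ≤ m) (hh : 2 ≤ h)
    (ζ : Fin m → List (Fin m)) (hlen : ∀ a, (ζ a).length = q)
    (hprim : IsPrimitive ζ)
    (U : ℕ → Fin m) (hU : ∀ i r : ℕ, r < q → U (q * i + r) = (ζ (U i)).getD r (U 0))
    (hcop : Nat.Coprime h q)
    (hdvd : ∀ k : ℕ, 1 ≤ k → U k = U 0 → h ∣ k)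
    (η : Fin m' → List (Fin m')) (hlen' : ∀ c, (η c).length = q)
    (φ : Fin m' → List (Fin m)) (hφlen : ∀ c, (φ c).length = h)
    (hφinj : Function.Injective φ)
    (hblocks : ∀ c : Fin m', ∃ k : ℕ, φ c = (List.range h).map fun r => U (h * k + r))
    (V : ℕ → Fin m')
    (hV : ∀ i r : ℕ, r < q → V (q * i + r) = (η (V i)).getD r (V 0))
    (hcode : ∀ k r : ℕ, r < h → U (h * k + r) = (φ (V k)).getD r (U 0))
    (θ : ℂ) (hθ0 : θ ≠ 0) (hθ1 : ∀ n : ℕ, 1 ≤ n → θ ^ n ≠ 1)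
    (z : Fin m' → ℂ) (hz0 : z ≠ 0)
    (hz : (substMatrixC η).transpose.mulVec z = θ • z) :
    ∃ v : Fin m → ℂ, v ≠ 0 ∧ (substMatrixC ζ).mulVec v = θ • v := by
  classical
  have hq : 2 ≤ q := two_le_q hm ζ hlen hprim
  have h0m : 0 < m := by omega
  let d : Fin m := ⟨0, h0m⟩
  have hzc : ∀ c : Fin m', ∑ c' : Fin m', ((η c).count c' : ℂ) * z c' = θ * z c := by
    intro c
    have h1 := congrFun hz c
    simpa [Matrix.mulVec, dotProduct, Matrix.transpose_apply, substMatrixC,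
      smul_eq_mul] using h1
  let PV : ℕ → ℂ := fun j => ∑ i ∈ Finset.range j, z (V i)
  have hPVstep : ∀ i : ℕ, ∑ r ∈ Finset.range q, z (V (q * i + r)) = θ * z (V i) := by
    intro i
    have h1 : ∀ r ∈ Finset.range q, z (V (q * i + r)) = z ((η (V i)).getD r (V 0)) :=
      fun r hr => by rw [hV i r (Finset.mem_range.mp hr)]
    rw [Finset.sum_congr rfl h1, ← hlen' (V i),
      sum_getD_count (η (V i)) (fun b => z b) (V 0)]
    exact hzc (V i)
  have hPVq : ∀ j, PV (q * j) = θ * PV j := by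
    intro j
    show (∑ i ∈ Finset.range (q * j), z (V i)) = θ * ∑ i ∈ Finset.range j, z (V i)
    rw [Nat.mul_comm q j, sum_range_mul'' (fun i => z (V i)) j q, Finset.mul_sum]
    exact Finset.sum_congr rfl fun i _ => hPVstep i
  have hPVqn : ∀ (n j : ℕ), PV (q ^ n * j) = θ ^ n * PV j := by
    intro n
    induction n with
    | zero => intro j; simp
    | succ n ihn =>
        intro j
        rw [show q ^ (n + 1) * j = q * (q ^ n * j) by ring, hPVq, ihn, pow_succ]
        ring
  -- every block occurs in V
  have hVocc : ∀ c : Fin m', ∃ k, V k = c := by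
    intro c
    obtain ⟨k, hk⟩ := hblocks c
    refine ⟨k, ?_⟩
    have hfc : φ c = φ (V k) := by
      rw [hk]
      apply List.ext_getElem (by simp [hφlen])
      intro r h1 h2
      have hr : r < h := by simpa using h1
      simp only [List.getElem_map, List.getElem_range]
      rw [hcode k r hr, List.getD_eq_getElem _ _ h2]
    exact (hφinj hfc).symm
  have hPVk : ∃ k, PV k ≠ 0 := by
    by_contra hcon
    push_neg at hcon
    apply hz0
    funext c
    obtain ⟨k, hk⟩ := hVocc c
    have h1 : PV (k + 1) = PV k + z (V k) := Finset.sum_range_succ (fun i => z (V i)) k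
    rw [hcon (k + 1), hcon k, zero_add] at h1
    rw [← hk, Pi.zero_apply]
    exact h1.symm
  obtain ⟨k0, hk0⟩ := hPVk
  -- windows of the fixed point
  let Wp : ℕ → (Fin h → Fin m) := fun p i => U (p + i)
  let cnt : ℕ → (Fin h → Fin m) → ℂ :=
    fun J y => ∑ p ∈ Finset.range J, (if Wp p = y then 1 else 0)
  have hWin : ∀ p r : ℕ, r < q → Wp (q * p + r) = winT ζ d (Wp p) r := by
    intro p r hr
    funext i
    have hi : (i : ℕ) < h := i.isLt
    have hsq : r + (i : ℕ) < q * h := aux_lt (by omega) (by omega) hr hi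
    have hdiv : q * ((r + (i : ℕ)) / q) + (r + (i : ℕ)) % q = r + (i : ℕ) :=
      Nat.div_add_mod _ q
    have hsq2 : (r + (i : ℕ)) / q < h := by
      rw [Nat.div_lt_iff_lt_mul (by omega : 0 < q)]
      calc r + (i : ℕ) < q * h := hsq
        _ = h * q := Nat.mul_comm q h
    have hmod : (r + (i : ℕ)) % q < q := Nat.mod_lt _ (by omega)
    have hlt : (r + (i : ℕ)) % q < (ζ (U (p + (r + (i : ℕ)) / q))).length := by
      rw [hlen]; exact hmod
    calc Wp (q * p + r) i = U (q * p + r + (i : ℕ)) := rfl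
      _ = U (q * (p + (r + (i : ℕ)) / q) + (r + (i : ℕ)) % q) := by
          congr 1
          calc q * p + r + (i : ℕ) = q * p + (q * ((r + (i : ℕ)) / q) + (r + (i : ℕ)) % q) := by
                rw [hdiv]; ring
            _ = q * (p + (r + (i : ℕ)) / q) + (r + (i : ℕ)) % q := by ring
      _ = (ζ (U (p + (r + (i : ℕ)) / q))).getD ((r + (i : ℕ)) % q) (U 0) :=
          hU _ _ hmod
      _ = (ζ (U (p + (r + (i : ℕ)) / q))).getD ((r + (i : ℕ)) % q) d :=
          getD_default_irrel _ _ hlt _ _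
      _ = (ζ (Wp p ⟨(r + (i : ℕ)) / q, hsq2⟩)).getD ((r + (i : ℕ)) % q) d := rfl
      _ = (wordOfT ζ (Wp p)).getD (q * ((r + (i : ℕ)) / q) + (r + (i : ℕ)) % q) d :=
          (getD_wordOfT ζ hlen (Wp p) d _ _ hsq2 hmod).symm
      _ = (wordOfT ζ (Wp p)).getD (r + (i : ℕ)) d := by rw [hdiv]
      _ = winT ζ d (Wp p) r i := rfl
  have hcntq : ∀ J, cnt (q * J) = (KT ζ d q h).mulVec (cnt J) := by
    intro J
    funext y
    show (∑ p ∈ Finset.range (q * J), if Wp p = y then (1 : ℂ) else 0) = _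
    rw [Nat.mul_comm q J, sum_range_mul'' (fun p => if Wp p = y then (1 : ℂ) else 0) J q]
    have hinner : ∀ p : ℕ,
        (∑ r ∈ Finset.range q, if Wp (q * p + r) = y then (1 : ℂ) else 0)
          = KT ζ d q h y (Wp p) := by
      intro p
      rw [Finset.sum_congr rfl fun r hr => by
        rw [hWin p r (Finset.mem_range.mp hr)]]
      exact (KT_apply_sum ζ d q h y (Wp p)).symm
    rw [Finset.sum_congr rfl fun p _ => hinner p]
    have hg := sum_group (Finset.range J) Wp (fun v => KT ζ d q h y v) (fun _ => 1)
    simp only [mul_one] at hg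
    rw [hg]
    simp only [Matrix.mulVec, dotProduct]
    rfl
  have hcntqn : ∀ (n : ℕ) (J : ℕ), cnt (q ^ n * J) = ((KT ζ d q h) ^ n).mulVec (cnt J) := by
    intro n
    induction n with
    | zero => intro J; simp
    | succ n ihn =>
        intro J
        rw [show q ^ (n + 1) * J = q * (q ^ n * J) by ring, hcntq, ihn,
          Matrix.mulVec_mulVec, ← pow_succ']
  -- the weight row supported on aligned blocks
  let phit : Fin m' → (Fin h → Fin m) := fun c i => (φ c).getD i (U 0)
  have hphit_inj : Function.Injective phit := by
    intro c c' hcc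
    apply hφinj
    apply List.ext_getElem (by rw [hφlen, hφlen])
    intro r h1 h2
    have hr : r < h := by rw [hφlen] at h1; exact h1
    have h3 := congrFun hcc ⟨r, hr⟩
    simp only [phit] at h3
    rw [← List.getD_eq_getElem _ (U 0) h1, ← List.getD_eq_getElem _ (U 0) h2]
    exact h3
  let R : (Fin h → Fin m) → ℂ := fun y => ∑ c : Fin m', z c * (if phit c = y then 1 else 0)
  have hRWp : ∀ p : ℕ, R (Wp p) = (if h ∣ p then z (V (p / h)) else 0) := by
    intro p
    by_cases hdp : h ∣ p
    · obtain ⟨i, rfl⟩ := hdp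
      have hWphi : Wp (h * i) = phit (V i) := by
        funext j
        show U (h * i + j) = (φ (V i)).getD j (U 0)
        exact hcode i j j.isLt
      rw [if_pos ⟨i, rfl⟩, Nat.mul_div_cancel_left i (by omega : 0 < h)]
      show (∑ c : Fin m', z c * if phit c = Wp (h * i) then 1 else 0) = z (V i)
      rw [hWphi]
      calc ∑ c : Fin m', z c * (if phit c = phit (V i) then (1 : ℂ) else 0)
          = ∑ c : Fin m', (if c = V i then z c else 0) := by
            refine Finset.sum_congr rfl fun c _ => ?_
            by_cases hc : c = V i
            · subst hc; simp
            · rw [if_neg (fun hcon => hc (hphit_inj hcon)), if_neg hc, mul_zero]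
        _ = z (V i) := by
            rw [Finset.sum_ite_eq' Finset.univ (V i) z]
            simp
    · rw [if_neg hdp]
      show (∑ c : Fin m', z c * if phit c = Wp p then 1 else 0) = 0
      refine Finset.sum_eq_zero fun c _ => ?_
      rw [if_neg, mul_zero]
      intro hcon
      obtain ⟨kc, hkc⟩ := hblocks c
      have hz1 : (0 : ℕ) < h := by omega
      have h1 : phit c ⟨0, hz1⟩ = U (h * kc) := by
        show (φ c).getD ((⟨0, hz1⟩ : Fin h) : ℕ) (U 0) = U (h * kc)
        rw [hkc, List.getD_eq_getElem _ _ (by simp; omega)]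
        simp
      have h2 : phit c ⟨0, hz1⟩ = U p := by
        rw [hcon]
        show U (p + ((⟨0, hz1⟩ : Fin h) : ℕ)) = U p
        rw [show ((⟨0, hz1⟩ : Fin h) : ℕ) = 0 from rfl, Nat.add_zero]
      have h3 : U (h * kc) = U p := h1.symm.trans h2
      have h4 := gamma_lemma ζ hlen hprim U hU hcop hdvd (h * kc) p h3
      rw [Nat.mul_mod_right] at h4
      exact hdp (Nat.dvd_of_mod_eq_zero h4.symm)
  have hRcnt : ∀ k' : ℕ, dotProduct R (cnt (h * k')) = PV k' := by
    intro k'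
    show (∑ y : Fin h → Fin m, R y * cnt (h * k') y) = PV k'
    have hg := sum_group (Finset.range (h * k')) Wp R (fun _ => 1)
    simp only [mul_one] at hg
    rw [← hg]
    rw [Finset.sum_congr rfl fun p _ => hRWp p]
    rw [Nat.mul_comm h k',
      sum_range_mul'' (fun p => if h ∣ p then z (V (p / h)) else 0) k' h]
    have hinner : ∀ i : ℕ,
        (∑ r ∈ Finset.range h, if h ∣ h * i + r then z (V ((h * i + r) / h)) else 0)
          = z (V i) := by
      intro i
      rw [Finset.sum_eq_single 0]
      · rw [Nat.add_zero, if_pos (Dvd.intro i rfl),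
          Nat.mul_div_cancel_left i (by omega : 0 < h)]
      · intro r hr hr0
        have hrh : r < h := Finset.mem_range.mp hr
        rw [if_neg]
        intro hcon
        have h5 : h ∣ r := (Nat.dvd_add_right (Dvd.intro i rfl)).mp hcon
        have h6 : h ≤ r := Nat.le_of_dvd (by omega) h5
        omega
      · intro h0
        exact absurd (Finset.mem_range.mpr (by omega : 0 < h)) h0
    rw [Finset.sum_congr rfl fun i _ => hinner i]
  have hseq : ∀ n : ℕ, dotProduct R (((KT ζ d q h) ^ n).mulVec (cnt (h * k0)))
      = θ ^ n * PV k0 := by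
    intro n
    rw [← hcntqn n (h * k0), show q ^ n * (h * k0) = h * (q ^ n * k0) by ring,
      hRcnt, hPVqn]
  obtain ⟨x, hx0, hx⟩ :=
    geom_charpoly_root (KT ζ d q h) R (cnt (h * k0)) θ (PV k0) hk0 hseq
  exact claimK hm hq ζ hlen d θ hθ0 hθ1 h (by omega) x hx0 hx

end PureBase
-- quick sanity checks
/-- Let `ζ` be a primitive aperiodic substitution of constant length `q` and
height `h > 1` with one-sided fixed point `U`, and let `η` be its pure base substitution on the
alphabet `ℐ` (of cardinality `m'`) of length-`h` blocks of `U`, with coding map `φ` satisfying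
`φ ∘ η = ζ ∘ φ` and `φ(V) = U` for the fixed point `V` of `η`.  Then the spectra of `S_ζ` and
`S_η` differ only by `0` or roots of unity: for every `θ ≠ 0` with `θⁿ ≠ 1` for all `n ≥ 1`,
`θ` is an eigenvalue of `S_ζ` iff it is an eigenvalue of `S_η`. -/
theorem pure_base_substitution_matrix_spectrum
    {m m' q h : ℕ} (hm : 2 ≤ m) (hh : 2 ≤ h)
    (ζ : Fin m → List (Fin m)) (hlen : ∀ a, (ζ a).length = q)
    (hprim : IsPrimitive ζ) (haper : (SubstSpace ζ).Infinite)
    -- a one-sided fixed point `U` of `ζ`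
    (U : ℕ → Fin m)
    (hU : ∀ i r : ℕ, r < q → U (q * i + r) = (ζ (U i)).getD r (U 0))
    -- `ζ` has height exactly `h`
    (hcop : Nat.Coprime h q)
    (hdvd : ∀ k : ℕ, 1 ≤ k → U k = U 0 → h ∣ k)
    (hmax : ∀ n : ℕ, Nat.Coprime n q → (∀ k : ℕ, 1 ≤ k → U k = U 0 → n ∣ k) → n ≤ h)
    -- the pure base substitution `η` on the alphabet `ℐ = Fin m'` of length-`h` blocks of `U`,
    -- with injective coding map `φ` such that `φ ∘ η = ζ ∘ φ`
    (η : Fin m' → List (Fin m')) (hlen' : ∀ c, (η c).length = q)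
    (φ : Fin m' → List (Fin m)) (hφlen : ∀ c, (φ c).length = h)
    (hφinj : Function.Injective φ)
    (hcomm : ∀ c, (η c).flatMap φ = substWord ζ (φ c))
    -- every letter of `ℐ` is a length-`h` block of `U` starting at a position divisible by `h`,
    -- and conversely every such block arises
    (hblocks : ∀ c : Fin m', ∃ k : ℕ, φ c = (List.range h).map fun r => U (h * k + r))
    (hblocks' : ∀ k : ℕ, ∃ c : Fin m', φ c = (List.range h).map fun r => U (h * k + r))
    -- the one-sided fixed point `V` of `η`, with `φ(V) = U`
    (V : ℕ → Fin m')
    (hV : ∀ i r : ℕ, r < q → V (q * i + r) = (η (V i)).getD r (V 0))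
    (hcode : ∀ k r : ℕ, r < h → U (h * k + r) = (φ (V k)).getD r (U 0)) :
    ∀ θ : ℂ, θ ≠ 0 → (∀ n : ℕ, 1 ≤ n → θ ^ n ≠ 1) →
      ((∃ v : Fin m → ℂ, v ≠ 0 ∧ (substMatrixC ζ).mulVec v = θ • v) ↔
        (∃ w : Fin m' → ℂ, w ≠ 0 ∧ (substMatrixC η).mulVec w = θ • w)) := by
  intro θ hθ0 hθ1
  constructor
  · rintro ⟨v, hv0, hv⟩
    have h1 : ∃ u : Fin m → ℂ, u ≠ 0 ∧ (substMatrixC ζ).transpose.mulVec u = θ • u := by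
      rw [PureBase.eig_transpose]
      exact ⟨v, hv0, hv⟩
    obtain ⟨u, hu0, hu⟩ := h1
    exact PureBase.forward_dir hh ζ hlen hprim U hU η hlen' φ V hV hcode θ hθ0 hθ1
      u hu0 hu
  · rintro ⟨w, hw0, hw⟩
    have h1 : ∃ z : Fin m' → ℂ, z ≠ 0 ∧ (substMatrixC η).transpose.mulVec z = θ • z := by
      rw [PureBase.eig_transpose]
      exact ⟨w, hw0, hw⟩
    obtain ⟨z, hz0, hz⟩ := h1
    exact PureBase.backward_dir hm hh ζ hlen hprim U hU hcop hdvd η hlen' φ hφlen hφinj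
      hblocks V hV hcode θ hθ0 hθ1 z hz0 hz
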